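/- Let k ≥ 2, let T be a tight k-tree, and let v be a vertex of T. Then the restricted link graph T(v) is a tight (k−1)-tree on at most Δ_1(T) + k − 1 vertices. -/

import Mathlib

open Finset

attribute [local instance] Classical.propDecidable

variable {α : Type*}

/-- The degree of a vertex `v` in a hypergraph `T`: the number of edges containing `v`. -/
def vdeg [DecidableEq α] (T : Finset (Finset α)) (v : α) : ℕ :=
  (T.filter fun e => v ∈ e).card

/-- The vertex set of a hypergraph: the union of its edges. -/
def hverts [DecidableEq α] (T : Finset (Finset α)) : Finset α := T.sup id

/-- The maximum 1-degree of a hypergraph. -/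
def hmaxDeg [DecidableEq α] (T : Finset (Finset α)) : ℕ := (hverts T).sup (vdeg T)

/-- `es` is a valid ordering of the edges of a tight `k`-tree: every edge is a `k`-set, and
every edge except the first contains a vertex `v` not in any previous edge with the rest of
the edge contained in some previous edge. -/
def ValidOrdering [DecidableEq α] (k : ℕ) (es : List (Finset α)) : Prop :=
  (∀ e ∈ es, e.card = k) ∧
  ∀ i, 0 < i → i < es.length →
    ∃ v ∈ es.getD i ∅,
      (∀ j, j < i → v ∉ es.getD j ∅) ∧
      ∃ j, j < i ∧ (es.getD i ∅) \ {v} ⊆ es.getD j ∅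

/-- `T` is a tight `k`-tree: its edges admit a valid ordering. -/
def IsTightTree [DecidableEq α] (k : ℕ) (T : Finset (Finset α)) : Prop :=
  ∃ es : List (Finset α), es ≠ [] ∧ es.Nodup ∧ es.toFinset = T ∧ ValidOrdering k es

/-- `f` belongs to the shadow of the `k`-graph `H`. -/
def InShadow [DecidableEq α] (k : ℕ) (H : Finset (Finset α)) (f : Finset α) : Prop :=
  f.card = k - 1 ∧ ∃ e ∈ H, f ⊆ e

/-- `H` contains (a copy of) `T`. -/
def Contains {β : Type*} [DecidableEq α] [DecidableEq β]
    (H : Finset (Finset α)) (T : Finset (Finset β)) : Prop :=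
  ∃ φ : β → α, Function.Injective φ ∧ ∀ e ∈ T, e.image φ ∈ H

/-- The restricted link graph of `v` with respect to `T`: the `(k−1)`-graph whose edges are the
sets `e \ {v}` for edges `e` of `T` containing `v`. -/
def linkGraph [DecidableEq α] (T : Finset (Finset α)) (v : α) : Finset (Finset α) :=
  (T.filter fun e => v ∈ e).image fun e => e.erase v

lemma mem_iff_getD [DecidableEq α] (es : List (Finset α)) (f : Finset α) :
    f ∈ es ↔ ∃ j, j < es.length ∧ es.getD j ∅ = f := by
  constructor
  · intro h
    obtain ⟨j, hj, he⟩ := List.mem_iff_getElem.1 h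
    exact ⟨j, hj, by rw [List.getD_eq_getElem _ _ hj]; exact he⟩
  · rintro ⟨j, hj, rfl⟩
    rw [List.getD_eq_getElem _ _ hj]
    exact List.getElem_mem hj

lemma vo_singleton [DecidableEq α] (k : ℕ) (e : Finset α) :
    ValidOrdering k [e] ↔ e.card = k := by
  constructor
  · intro ⟨h, _⟩; exact h e (by simp)
  · intro h
    refine ⟨by simpa using h, fun i hi hi' => absurd hi' (by simp; omega)⟩

lemma vo_append [DecidableEq α] (k : ℕ) (es : List (Finset α)) (e : Finset α) (hne : es ≠ []) :
    ValidOrdering k (es ++ [e]) ↔ ValidOrdering k es ∧ e.card = k ∧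
      ∃ w ∈ e, (∀ f ∈ es, w ∉ f) ∧ ∃ f ∈ es, e \ {w} ⊆ f := by
  have hlen : (es ++ [e]).length = es.length + 1 := by simp
  have hgetD : ∀ i, i < es.length → (es ++ [e]).getD i ∅ = es.getD i ∅ :=
    fun i hi => List.getD_append _ _ _ _ hi
  have hgetDlast : (es ++ [e]).getD es.length ∅ = e := by
    rw [List.getD_eq_getElem _ _ (by simp)]
    simp
  constructor
  · rintro ⟨hcard, hstep⟩
    refine ⟨⟨fun f hf => hcard f (by simp [hf]), ?_⟩, hcard e (by simp), ?_⟩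
    · intro i hi hi'
      obtain ⟨w, hw, hnew, j, hj, hsub⟩ := hstep i hi (by omega)
      rw [hgetD i hi'] at hw hsub
      exact ⟨w, hw, fun j' hj' => by rw [← hgetD j' (by omega)]; exact hnew j' hj',
        j, hj, by rw [← hgetD j (by omega)]; exact hsub⟩
    · have hl : 0 < es.length := List.length_pos_iff.2 hne
      obtain ⟨w, hw, hnew, j, hj, hsub⟩ := hstep es.length hl (by omega)
      rw [hgetDlast] at hw hsub
      refine ⟨w, hw, ?_, ?_⟩
      · intro f hf
        obtain ⟨j', hj', rfl⟩ := (mem_iff_getD es f).1 hf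
        rw [← hgetD j' hj']
        exact hnew j' hj'
      · refine ⟨es.getD j ∅, (mem_iff_getD es _).2 ⟨j, hj, rfl⟩, ?_⟩
        rw [hgetD j hj] at hsub
        exact hsub
  · rintro ⟨⟨hcard, hstep⟩, hce, w, hw, hnew, f, hf, hsub⟩
    refine ⟨fun g hg => by rcases List.mem_append.1 hg with h | h; exacts [hcard g h, by simp at h; subst h; exact hce], ?_⟩
    intro i hi hi'
    rcases lt_or_ge i es.length with h | h
    · obtain ⟨w', hw', hnew', j, hj, hsub'⟩ := hstep i hi h
      rw [hgetD i h]
      exact ⟨w', hw', fun j' hj' => by rw [hgetD j' (by omega)]; exact hnew' j' hj',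
        j, hj, by rw [hgetD j (by omega)]; exact hsub'⟩
    · have : i = es.length := by omega
      subst this
      rw [hgetDlast]
      obtain ⟨j, hj, rfl⟩ := (mem_iff_getD es f).1 hf
      refine ⟨w, hw, ?_, j, hj, by rw [hgetD j hj]; exact hsub⟩
      intro j' hj'
      rw [hgetD j' hj']
      exact hnew _ ((mem_iff_getD es _).2 ⟨j', hj', rfl⟩)

lemma vo_verts_card [DecidableEq α] (m : ℕ) (es : List (Finset α)) (hne : es ≠ [])
    (hvo : ValidOrdering m es) : (es.toFinset.sup id).card ≤ m + es.length - 1 := by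
  induction es using List.reverseRecOn with
  | nil => simp at hne
  | append_singleton es e ih =>
    rcases eq_or_ne es [] with rfl | hne'
    · simpa using (vo_singleton m e).1 hvo |>.le
    · rw [vo_append m es e hne'] at hvo
      obtain ⟨hvo', hce, w, hw, hnew, f, hf, hsub⟩ := hvo
      have h1 := ih hne' hvo'
      have hsup : ((es ++ [e]).toFinset.sup id) ⊆ insert w (es.toFinset.sup id) := by
        intro x hx
        simp only [List.toFinset_append, Finset.sup_union] at hx
        rcases Finset.mem_union.1 hx with hx | hx
        · exact Finset.mem_insert_of_mem hx
        · simp only [List.toFinset_cons, List.toFinset_nil, LawfulSingleton.insert_empty_eq,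
            Finset.sup_singleton, id] at hx
          rcases eq_or_ne x w with rfl | hxw
          · exact Finset.mem_insert_self _ _
          · have : x ∈ e \ {w} := by simp [hx, hxw]
            exact Finset.mem_insert_of_mem
              (Finset.mem_sup.2 ⟨f, List.mem_toFinset.2 hf, hsub this⟩)
      calc ((es ++ [e]).toFinset.sup id).card ≤ (insert w (es.toFinset.sup id)).card :=
            Finset.card_le_card hsup
        _ ≤ (es.toFinset.sup id).card + 1 := Finset.card_insert_le _ _
        _ ≤ m + (es ++ [e]).length - 1 := by
            simp only [List.length_append, List.length_singleton]
            have : 0 < es.length := List.length_pos_iff.2 hne'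
            omega

lemma link_valid [DecidableEq α] (k : ℕ) (hk : 2 ≤ k) (v : α) (es : List (Finset α))
    (hvo : ValidOrdering k es) :
    ValidOrdering (k - 1) ((es.filter (fun e => v ∈ e)).map (fun e => e.erase v)) := by
  induction es using List.reverseRecOn with
  | nil => exact ⟨by simp, by simp⟩
  | append_singleton es e ih =>
    have hcaseV : v ∈ e → (e.erase v).card = k - 1 := fun hve => by
      have : e.card = k := by
        rcases eq_or_ne es [] with rfl | hne'
        · exact (vo_singleton k e).1 hvo
        · exact ((vo_append k es e hne').1 hvo).2.1
      rw [Finset.card_erase_of_mem hve, this]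
    rcases eq_or_ne es [] with rfl | hne'
    · by_cases hve : v ∈ e
      · have hfe : List.filter (fun e => decide (v ∈ e)) ([] ++ [e]) = [e] := by simp [hve]
        rw [hfe, List.map_cons, List.map_nil]
        exact (vo_singleton _ _).2 (hcaseV hve)
      · have hfe : List.filter (fun e => decide (v ∈ e)) ([] ++ [e]) = [] := by simp [hve]
        rw [hfe, List.map_nil]
        exact ⟨by simp, by simp⟩
    · rw [vo_append k es e hne'] at hvo
      obtain ⟨hvo', hce, w, hw, hnew, f, hf, hsub⟩ := hvo
      have ihv := ih hvo'
      rw [List.filter_append, List.map_append]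
      by_cases hve : v ∈ e
      swap
      · have : List.filter (fun e => decide (v ∈ e)) [e] = [] := by simp [hve]
        rw [this, List.map_nil, List.append_nil]
        exact ihv
      · have hfe : List.filter (fun e => decide (v ∈ e)) [e] = [e] := by
          simp [hve]
        rw [hfe]
        by_cases hL : (es.filter (fun e => v ∈ e)) = []
        · -- no previous edge contains v; then w = v
          simp only [hL, List.map_nil, List.nil_append, List.map_cons, List.map_nil]
          exact (vo_singleton _ _).2 (hcaseV hve)
        · -- previous edge contains v, so w ≠ v
          have hvprev : ∃ g ∈ es, v ∈ g := by
            rcases List.exists_mem_of_ne_nil _ hL with ⟨g, hg⟩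
            have := List.mem_filter.1 hg
            exact ⟨g, this.1, by simpa using this.2⟩
          obtain ⟨g, hg, hvg⟩ := hvprev
          have hwv : w ≠ v := fun h => hnew g hg (h ▸ hvg)
          have hLne : (es.filter (fun e => v ∈ e)).map (fun e => e.erase v) ≠ [] := by
            simp [hL]
          simp only [List.map_cons, List.map_nil]
          rw [vo_append _ _ _ hLne]
          refine ⟨ihv, hcaseV hve, w, Finset.mem_erase.2 ⟨hwv, hw⟩, ?_, ?_⟩
          · intro f' hf'
            obtain ⟨g', hg', rfl⟩ := List.mem_map.1 hf'
            have hg'' := (List.mem_filter.1 hg').1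
            exact fun hwf' => hnew g' hg'' (Finset.mem_of_mem_erase hwf')
          · have hvf : v ∈ f := hsub (Finset.mem_sdiff.2 ⟨hve, by simp [Ne.symm hwv]⟩)
            refine ⟨f.erase v, List.mem_map.2 ⟨f, List.mem_filter.2 ⟨hf, by simpa using hvf⟩, rfl⟩, ?_⟩
            intro x hx
            obtain ⟨hx1, hx2⟩ := Finset.mem_sdiff.1 hx
            obtain ⟨hxv, hxe⟩ := Finset.mem_erase.1 hx1
            exact Finset.mem_erase.2 ⟨hxv, hsub (Finset.mem_sdiff.2 ⟨hxe, hx2⟩)⟩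

/-- If `T` is a tight `k`-tree (`k ≥ 2`) and `v` is a vertex of `T`, then the
restricted link graph `T(v)` is a tight `(k−1)`-tree on at most `Δ₁(T) + k − 1` vertices. -/
theorem link_graph_is_tight_tree [DecidableEq α] (k : ℕ) (hk : 2 ≤ k)
    (T : Finset (Finset α)) (hT : IsTightTree k T) (v : α) (hv : v ∈ hverts T) :
    IsTightTree (k - 1) (linkGraph T v) ∧
    (hverts (linkGraph T v)).card ≤ hmaxDeg T + k - 1 := by
  obtain ⟨es, hne, hnd, hfin, hvo⟩ := hT
  set L := es.filter (fun e => v ∈ e) with hL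
  set M := L.map (fun e => e.erase v) with hM
  obtain ⟨e0, he0T, hve0⟩ := Finset.mem_sup.1 hv
  have he0es : e0 ∈ es := by rw [← hfin] at he0T; exact List.mem_toFinset.1 he0T
  have he0L : e0 ∈ L := List.mem_filter.2 ⟨he0es, by simpa using hve0⟩
  have hMne : M ≠ [] := by
    simp only [hM, ne_eq, List.map_eq_nil_iff]
    exact List.ne_nil_of_mem he0L
  have hMnd : M.Nodup := by
    refine List.Nodup.map_on ?_ (hnd.filter _)
    intro e1 he1 e2 he2 h
    have hv1 : v ∈ e1 := by simpa using (List.mem_filter.1 he1).2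
    have hv2 : v ∈ e2 := by simpa using (List.mem_filter.1 he2).2
    rw [← Finset.insert_erase hv1, ← Finset.insert_erase hv2, h]
  have hMfin : M.toFinset = linkGraph T v := by
    ext f
    simp only [hM, hL, linkGraph, List.mem_toFinset, List.mem_map, List.mem_filter,
      Finset.mem_image, Finset.mem_filter, ← hfin, decide_eq_true_eq]
  have hMvo : ValidOrdering (k - 1) M := link_valid k hk v es hvo
  have hlen : M.length = vdeg T v := by
    have : L.toFinset.card = L.length := List.toFinset_card_of_nodup (hnd.filter _)
    rw [hM, List.length_map, ← this]
    unfold vdeg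
    congr 1
    ext f
    simp [hL, List.mem_filter, ← hfin]
  have hdeg : vdeg T v ≤ hmaxDeg T := Finset.le_sup hv
  have hlen1 : 1 ≤ M.length := List.length_pos_iff.2 hMne
  have hcard := vo_verts_card (k - 1) M hMne hMvo
  refine ⟨⟨M, hMne, hMnd, hMfin, hMvo⟩, ?_⟩
  have : hverts (linkGraph T v) = M.toFinset.sup id := by rw [hMfin]; rfl
  rw [this]
  omega
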